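/- Let F₀ : ℝ → [0,1] be strictly increasing on its support and let 𝒳 ⊂ ℝᵖ contain a closed Euclidean ball of positive radius. Suppose F : ℝ → [0,1] is nondecreasing, β, β₀ ∈ ℝᵖ with ‖β‖₂ = ‖β₀‖₂ = 1, and F(vᵀβ) = F₀(vᵀβ₀) for all v ∈ 𝒳 − 𝒳 := {x₁ − x₂ : x₁, x₂ ∈ 𝒳}. Then β = β₀ (and hence F = F₀ on the relevant set). -/
import Mathlib


open RealInnerProductSpace

/-- Identifiability: if F₀ : ℝ → [0,1] is strictly increasing, 𝒳 ⊆ ℝᵖ contains a closed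
ball of positive radius, F : ℝ → [0,1] is nondecreasing, β, β₀ are unit vectors and
F((x₁ − x₂)ᵀβ) = F₀((x₁ − x₂)ᵀβ₀) for all x₁, x₂ ∈ 𝒳, then β = β₀. -/
theorem stmt17 (p : ℕ) (F₀ F : ℝ → ℝ)
    (hF₀mono : StrictMono F₀) (hF₀range : ∀ t, F₀ t ∈ Set.Icc (0 : ℝ) 1)
    (hFmono : Monotone F) (hFrange : ∀ t, F t ∈ Set.Icc (0 : ℝ) 1)
    (𝒳 : Set (EuclideanSpace ℝ (Fin p)))
    (hball : ∃ (x₀ : EuclideanSpace ℝ (Fin p)) (r : ℝ), 0 < r ∧ Metric.closedBall x₀ r ⊆ 𝒳)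
    (β β₀ : EuclideanSpace ℝ (Fin p)) (hβ : ‖β‖ = 1) (hβ₀ : ‖β₀‖ = 1)
    (heq : ∀ x₁ ∈ 𝒳, ∀ x₂ ∈ 𝒳, F ⟪x₁ - x₂, β⟫ = F₀ ⟪x₁ - x₂, β₀⟫) :
    β = β₀ := by
  by_contra hne
  obtain ⟨x₀, r, hr, hsub⟩ := hball
  -- inner β β₀ < 1
  have hle : ⟪β, β₀⟫ ≤ 1 := by
    calc ⟪β, β₀⟫ ≤ ‖β‖ * ‖β₀‖ := real_inner_le_norm β β₀
    _ = 1 := by rw [hβ, hβ₀]; ring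
  have hne1 : ⟪β, β₀⟫ ≠ 1 := fun h => hne ((inner_eq_one_iff_of_norm_eq_one hβ hβ₀).mp h)
  have hlt : ⟪β, β₀⟫ < 1 := lt_of_le_of_ne hle hne1
  set d : EuclideanSpace ℝ (Fin p) := β - β₀ with hd
  have hdne : d ≠ 0 := sub_ne_zero.mpr hne
  have hdnorm : 0 < ‖d‖ := norm_pos_iff.mpr hdne
  set η : ℝ := r / ‖d‖ with hη
  have hηpos : 0 < η := div_pos hr hdnorm
  set v : EuclideanSpace ℝ (Fin p) := η • d with hv
  have hx₀ : x₀ ∈ 𝒳 := hsub (Metric.mem_closedBall_self hr.le)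
  have hx₁ : x₀ + v ∈ 𝒳 := by
    apply hsub
    rw [Metric.mem_closedBall, dist_eq_norm, add_sub_cancel_left, hv, norm_smul,
      Real.norm_eq_abs, abs_of_pos hηpos, hη, div_mul_cancel₀ r hdnorm.ne']
  have key : F ⟪v, β⟫ = F₀ ⟪v, β₀⟫ := by
    have := heq (x₀ + v) hx₁ x₀ hx₀
    rwa [add_sub_cancel_left] at this
  have h0 : F 0 = F₀ 0 := by
    have := heq x₀ hx₀ x₀ hx₀
    simpa using this
  have hvβ₀ : ⟪v, β₀⟫ < 0 := by
    rw [hv, hd, real_inner_smul_left, inner_sub_left, real_inner_self_eq_norm_sq, hβ₀]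
    nlinarith [real_inner_comm β β₀]
  have hvβ : 0 ≤ ⟪v, β⟫ := by
    rw [hv, hd, real_inner_smul_left, inner_sub_left, real_inner_self_eq_norm_sq, hβ]
    nlinarith [real_inner_comm β β₀]
  have h1 : F₀ ⟪v, β₀⟫ < F₀ 0 := hF₀mono hvβ₀
  have h2 : F 0 ≤ F ⟪v, β⟫ := hFmono hvβ
  rw [key, h0] at h2
  exact absurd h2 (not_le.mpr h1)
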